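/- arXiv:2204.10132 — 4 statements merged into one kernel-verified Lean document; each statement's English description precedes it below -/
import Mathlib

section
/- Let m and n be positive integers and let a be a nonzero rational number. Then ∑_{k=0}^{n−1} binom(a,k)^m · ∑_{r=0}^{⌊(m−1)/2⌋} C(m,2r+1) (1 − (2/a)k)^{2r+1} = 2^{m−1} binom(a−1, n−1)^m, and ∑_{k=0}^{n−1} (−1)^k binom(a,k)^m · ∑_{r=0}^{⌊m/2⌋} C(m,2r) (1 − (2/a)k)^{2r} = 2^{m−1} (−1)^{n−1} binom(a−1, n−1)^m. -/
/-- The generalized binomial coefficient `a(a-1)⋯(a-k+1)/k!` for a rational `a`. -/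
def ratBinom (a : ℚ) (k : ℕ) : ℚ := (∏ i ∈ Finset.range k, (a - i)) / (Nat.factorial k : ℚ)

/-- `x` is a `p`-adic integer: the denominator of the reduced fraction is not divisible by `p`. -/
def isPInt (p : ℕ) (x : ℚ) : Prop := ¬ p ∣ x.den

/-- `x ≡ y (mod p^m)` for rationals that are `p`-adic integers. -/
def ratModEq (p m : ℕ) (x y : ℚ) : Prop := isPInt p ((x - y) / (p : ℚ) ^ m)

/-- The harmonic number `H_n = 1 + 1/2 + ⋯ + 1/n`. -/
def harm (n : ℕ) : ℚ := ∑ i ∈ Finset.range n, (1 : ℚ) / (i + 1)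

/-- `H_n^{(2)} = 1 + 1/2² + ⋯ + 1/n²`. -/
def harm2 (n : ℕ) : ℚ := ∑ i ∈ Finset.range n, (1 : ℚ) / ((i : ℚ) + 1) ^ 2

/-- The even-indexed Euler numbers: `eulerEven n = E_{2n}`, satisfying
`E_0 = 1` and `E_{2n} = -∑_{k=1}^{n} C(2n,2k) E_{2n-2k}` for `n ≥ 1`. -/
def eulerEven : ℕ → ℚ :=
  WellFounded.fix Nat.lt_wfRel.wf fun n eulerEven =>
    if n = 0 then 1
    else -∑ k : Fin n, ((2 * n).choose (2 * (k : ℕ)) : ℚ) * eulerEven k k.2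

/-- The Euler numbers `E_n`: `E_0 = 1`, `E_{2n-1} = 0`,
`E_{2n} = -∑_{k=1}^{n} C(2n,2k) E_{2n-2k}`. -/
def eulerNumber (n : ℕ) : ℚ := if n % 2 = 0 then eulerEven (n / 2) else 0

/-- The Euler polynomial `E_n(x) = 2^{-n} ∑_{k=0}^{n} C(n,k) (2x-1)^{n-k} E_k`. -/
def eulerPoly (n : ℕ) (x : ℚ) : ℚ :=
  (∑ k ∈ Finset.range (n + 1), (n.choose k : ℚ) * (2 * x - 1) ^ (n - k) * eulerNumber k) / 2 ^ n

/-- Even-indexed part of the sequence `U_n`: `uEven n = U_{2n}`, with `U_0 = 1` and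
`U_{2n} = -2∑_{k=1}^{n} C(2n,2k) U_{2n-2k}` for `n ≥ 1`. -/
def uEven : ℕ → ℚ :=
  WellFounded.fix Nat.lt_wfRel.wf fun n uEven =>
    if n = 0 then 1
    else -2 * ∑ k : Fin n, ((2 * n).choose (2 * (k : ℕ)) : ℚ) * uEven k k.2

/-- The sequence `U_n`: `U_0 = 1`, `U_{2n-1} = 0`, `U_{2n} = -2∑_{k=1}^{n} C(2n,2k) U_{2n-2k}`. -/
def uSeq (n : ℕ) : ℚ := if n % 2 = 0 then uEven (n / 2) else 0


lemma prodShift (a : ℚ) (k : ℕ) :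
    (∏ i ∈ Finset.range k, (a - i)) * (a - k) = a * ∏ i ∈ Finset.range k, (a - 1 - i) := by
  rw [← Finset.prod_range_succ, Finset.prod_range_succ']
  rw [mul_comm]
  congr 1
  · norm_num
  · exact Finset.prod_congr rfl fun i _ => by push_cast; ring

lemma rb1 (a : ℚ) (ha : a ≠ 0) (k : ℕ) :
    ratBinom a k * ((a - k) / a) = ratBinom (a - 1) k := by
  unfold ratBinom
  rw [div_mul_div_comm, prodShift, mul_comm (Nat.factorial k : ℚ) a,
    mul_div_mul_left _ _ ha]

lemma rb2 (a : ℚ) (ha : a ≠ 0) (k : ℕ) :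
    ratBinom a (k + 1) * (((k : ℚ) + 1) / a) = ratBinom (a - 1) k := by
  have hf : (Nat.factorial k : ℚ) ≠ 0 := by positivity
  unfold ratBinom
  rw [Finset.prod_range_succ', Nat.factorial_succ]
  push_cast
  have hp : ∀ i ∈ Finset.range k, a - ((i:ℚ)+1) = a - 1 - i := fun i _ => by ring
  rw [Finset.prod_congr rfl hp]
  field_simp
  ring

lemma oddSum (m : ℕ) (hm : 0 < m) (x : ℚ) :
    2 * ∑ r ∈ Finset.range ((m - 1) / 2 + 1), (m.choose (2 * r + 1) : ℚ) * x ^ (2 * r + 1)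
      = (1 + x) ^ m - (1 - x) ^ m := by
  have h1 : (1 + x) ^ m = ∑ j ∈ Finset.range (m + 1), x ^ j * (m.choose j : ℚ) := by
    rw [add_comm]
    simpa using add_pow x 1 m
  have h2 : (1 - x) ^ m = ∑ j ∈ Finset.range (m + 1), (-1 : ℚ) ^ j * x ^ j * (m.choose j : ℚ) := by
    have h : (1 - x) = (-x) + 1 := by ring
    rw [h, add_pow]
    exact Finset.sum_congr rfl fun j _ => by rw [neg_pow]; ring
  rw [h1, h2, ← Finset.sum_sub_distrib]
  have h3 : ∀ j ∈ Finset.range (m + 1),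
      x ^ j * (m.choose j : ℚ) - (-1 : ℚ) ^ j * x ^ j * (m.choose j : ℚ)
        = if j % 2 = 1 then 2 * ((m.choose j : ℚ) * x ^ j) else 0 := by
    intro j _
    rcases Nat.even_or_odd j with hj | hj
    · rw [if_neg (by rw [Nat.even_iff] at hj; omega), hj.neg_one_pow]; ring
    · rw [if_pos (by rw [Nat.odd_iff] at hj; omega), hj.neg_one_pow]; ring
  rw [Finset.sum_congr rfl h3, ← Finset.sum_filter, Finset.mul_sum]
  refine Finset.sum_nbij' (fun r => 2 * r + 1) (fun j => j / 2) ?_ ?_ ?_ ?_ ?_ <;>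
    intro y hy <;> (try dsimp only) <;>
    simp only [Finset.mem_range, Finset.mem_filter] at * <;> omega

lemma evenSum (m : ℕ) (x : ℚ) :
    2 * ∑ r ∈ Finset.range (m / 2 + 1), (m.choose (2 * r) : ℚ) * x ^ (2 * r)
      = (1 + x) ^ m + (1 - x) ^ m := by
  have h1 : (1 + x) ^ m = ∑ j ∈ Finset.range (m + 1), x ^ j * (m.choose j : ℚ) := by
    rw [add_comm]
    simpa using add_pow x 1 m
  have h2 : (1 - x) ^ m = ∑ j ∈ Finset.range (m + 1), (-1 : ℚ) ^ j * x ^ j * (m.choose j : ℚ) := by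
    have h : (1 - x) = (-x) + 1 := by ring
    rw [h, add_pow]
    exact Finset.sum_congr rfl fun j _ => by rw [neg_pow]; ring
  rw [h1, h2, ← Finset.sum_add_distrib]
  have h3 : ∀ j ∈ Finset.range (m + 1),
      x ^ j * (m.choose j : ℚ) + (-1 : ℚ) ^ j * x ^ j * (m.choose j : ℚ)
        = if j % 2 = 0 then 2 * ((m.choose j : ℚ) * x ^ j) else 0 := by
    intro j _
    rcases Nat.even_or_odd j with hj | hj
    · rw [if_pos (by rw [Nat.even_iff] at hj; omega), hj.neg_one_pow]; ring
    · rw [if_neg (by rw [Nat.odd_iff] at hj; omega), hj.neg_one_pow]; ring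
  rw [Finset.sum_congr rfl h3, ← Finset.sum_filter, Finset.mul_sum]
  refine Finset.sum_nbij' (fun r => 2 * r) (fun j => j / 2) ?_ ?_ ?_ ?_ ?_ <;>
    intro y hy <;> (try dsimp only) <;>
    simp only [Finset.mem_range, Finset.mem_filter] at * <;> omega
theorem stmt0 (m n : ℕ) (hm : 0 < m) (hn : 0 < n) (a : ℚ) (ha : a ≠ 0) :
    (∑ k ∈ Finset.range n, ratBinom a k ^ m *
        ∑ r ∈ Finset.range ((m - 1) / 2 + 1),
          (m.choose (2 * r + 1) : ℚ) * (1 - 2 / a * k) ^ (2 * r + 1)) =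
      2 ^ (m - 1) * ratBinom (a - 1) (n - 1) ^ m ∧
    (∑ k ∈ Finset.range n, (-1 : ℚ) ^ k * ratBinom a k ^ m *
        ∑ r ∈ Finset.range (m / 2 + 1),
          (m.choose (2 * r) : ℚ) * (1 - 2 / a * k) ^ (2 * r)) =
      2 ^ (m - 1) * (-1 : ℚ) ^ (n - 1) * ratBinom (a - 1) (n - 1) ^ m := by
  have h2m : (2 : ℚ) ^ m = 2 * 2 ^ (m - 1) := by
    rw [← pow_succ']
    congr 1
    omega
  have hplus : ∀ k : ℕ, ratBinom a k * (1 + (1 - 2 / a * k)) = 2 * ratBinom (a - 1) k := by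
    intro k
    have h : 1 + (1 - 2 / a * k) = 2 * ((a - k) / a) := by field_simp; ring
    rw [h, mul_left_comm, rb1 a ha]
  have hminus : ∀ k : ℕ, ratBinom a (k + 1) * (1 - (1 - 2 / a * (k + 1 : ℕ))) =
      2 * ratBinom (a - 1) k := by
    intro k
    have h : 1 - (1 - 2 / a * ((k : ℕ) + 1 : ℕ)) = 2 * (((k : ℚ) + 1) / a) := by
      push_cast; field_simp; ring
    rw [h, mul_left_comm, rb2 a ha]
  have hminus0 : (1 : ℚ) - (1 - 2 / a * (0 : ℕ)) = 0 := by push_cast; ring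
  constructor
  · -- odd part
    set F : ℕ → ℚ := fun k => if k = 0 then 0 else 2 ^ (m - 1) * ratBinom (a - 1) (k - 1) ^ m
      with hF
    have key : ∀ k ∈ Finset.range n, (ratBinom a k ^ m *
        ∑ r ∈ Finset.range ((m - 1) / 2 + 1),
          (m.choose (2 * r + 1) : ℚ) * (1 - 2 / a * k) ^ (2 * r + 1)) = F (k + 1) - F k := by
      intro k _
      refine mul_left_cancel₀ (two_ne_zero) ?_
      have e1 : 2 * (ratBinom a k ^ m *
          ∑ r ∈ Finset.range ((m - 1) / 2 + 1),
            (m.choose (2 * r + 1) : ℚ) * (1 - 2 / a * k) ^ (2 * r + 1))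
          = ratBinom a k ^ m * ((1 + (1 - 2 / a * k)) ^ m - (1 - (1 - 2 / a * k)) ^ m) := by
        rw [← oddSum m hm (1 - 2 / a * k)]; ring
      rw [e1, mul_sub, ← mul_pow, ← mul_pow, hplus k]
      cases k with
      | zero =>
          rw [hminus0, mul_zero, zero_pow hm.ne']
          simp only [hF, Nat.add_sub_cancel, if_neg (Nat.one_ne_zero), if_pos rfl]
          rw [mul_pow, h2m]
          ring
      | succ j =>
          rw [hminus j]
          simp only [hF, Nat.add_sub_cancel, Nat.succ_ne_zero, if_neg, ite_false]
          rw [mul_pow, mul_pow, h2m]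
          ring
    rw [Finset.sum_congr rfl key, Finset.sum_range_sub F n]
    simp only [hF]
    norm_num [hn.ne']
  · -- even part
    set G : ℕ → ℚ := fun k => if k = 0 then 0
        else 2 ^ (m - 1) * (-1 : ℚ) ^ (k - 1) * ratBinom (a - 1) (k - 1) ^ m
      with hG
    have key : ∀ k ∈ Finset.range n, ((-1 : ℚ) ^ k * ratBinom a k ^ m *
        ∑ r ∈ Finset.range (m / 2 + 1),
          (m.choose (2 * r) : ℚ) * (1 - 2 / a * k) ^ (2 * r)) = G (k + 1) - G k := by
      intro k _
      refine mul_left_cancel₀ (two_ne_zero) ?_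
      have e1 : 2 * ((-1 : ℚ) ^ k * ratBinom a k ^ m *
          ∑ r ∈ Finset.range (m / 2 + 1),
            (m.choose (2 * r) : ℚ) * (1 - 2 / a * k) ^ (2 * r))
          = (-1 : ℚ) ^ k * (ratBinom a k ^ m *
              ((1 + (1 - 2 / a * k)) ^ m + (1 - (1 - 2 / a * k)) ^ m)) := by
        rw [← evenSum m (1 - 2 / a * k)]; ring
      rw [e1, mul_add, ← mul_pow, ← mul_pow, hplus k]
      cases k with
      | zero =>
          rw [hminus0, mul_zero, zero_pow hm.ne']
          simp only [hG, Nat.add_sub_cancel, if_neg (Nat.one_ne_zero), if_pos rfl]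
          rw [mul_pow, h2m]
          ring
      | succ j =>
          rw [hminus j]
          simp only [hG, Nat.add_sub_cancel, Nat.succ_ne_zero, if_neg, ite_false]
          rw [mul_pow, mul_pow, h2m]
          ring
    rw [Finset.sum_congr rfl key, Finset.sum_range_sub G n]
    simp only [hG]
    norm_num [hn.ne']
end

section
/- Let p be an odd prime. Then: (i) ∑_{k=0}^{p−1} (4k+1) C(2k,k)/(−4)^k ≡ (3 − 2^p) p (mod p³); (ii) ∑_{k=0}^{p−1} (4k+1) C(2k,k)²/16^k ≡ ∑_{k=0}^{p−1} (8k²+4k+1) C(2k,k)²/(−16)^k ≡ (5 − 2^{p+1}) p² (mod p⁴); (iii) ∑_{k=0}^{p−1} (3(4k+1) + (4k+1)³) C(2k,k)³/(−64)^k ≡ ∑_{k=0}^{p−1} (1 + 3(4k+1)²) C(2k,k)³/64^k ≡ 4(7 − 6·2^{p−1}) p³ (mod p⁵); (iv) 4 ∑_{k=0}^{p−1} ((4k+1) + (4k+1)³) C(2k,k)⁴/256^k ≡ ∑_{k=0}^{p−1} (1 + 6(4k+1)² + (4k+1)⁴) C(2k,k)⁴/(−256)^k ≡ 8(9 − 2^{p+2})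 p⁴ (mod p⁶). -/
section StmtTwoAux

lemma stmt2_cbq (n : ℕ) : ((2 * (n + 1)).choose (n + 1) : ℚ)
    = (4 * n + 2) * ((2 * n).choose n : ℚ) / ((n : ℚ) + 1) := by
  have h := Nat.succ_mul_centralBinom_succ n
  simp only [Nat.centralBinom] at h
  have h' := congrArg (Nat.cast : ℕ → ℚ) h
  push_cast at h'
  have hn : ((n : ℚ) + 1) ≠ 0 := by positivity
  field_simp
  linarith

lemma stmt2_id1 (n : ℕ) :
    ∑ k ∈ Finset.range n, (4 * (k : ℚ) + 1) * ((2 * k).choose k : ℚ) / (-4 : ℚ) ^ k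
    = -(-1 : ℚ) ^ n * (2 * n) * ((2 * n).choose n : ℚ) / 4 ^ n := by
  induction n with
  | zero => simp
  | succ n ih =>
    rw [Finset.sum_range_succ, ih, stmt2_cbq]
    have h4 : (4 : ℚ) ^ n ≠ 0 := by positivity
    have hn : ((n : ℚ) + 1) ≠ 0 := by positivity
    have hneg : ((-4 : ℚ)) ^ n = (-1) ^ n * 4 ^ n := by rw [← neg_one_mul, mul_pow]
    rcases Nat.even_or_odd n with he | ho
    · simp only [hneg, he.neg_one_pow, (Even.add_one he).neg_one_pow]
      push_cast; field_simp; ring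
    · simp only [hneg, ho.neg_one_pow, (Odd.add_one ho).neg_one_pow]
      push_cast; field_simp; ring

lemma stmt2_id2 (n : ℕ) :
    ∑ k ∈ Finset.range n, (4 * (k : ℚ) + 1) * ((2 * k).choose k : ℚ) ^ 2 / (16 : ℚ) ^ k
    = 4 * n ^ 2 * ((2 * n).choose n : ℚ) ^ 2 / 16 ^ n := by
  induction n with
  | zero => simp
  | succ n ih =>
    rw [Finset.sum_range_succ, ih, stmt2_cbq]
    have h4 : (16 : ℚ) ^ n ≠ 0 := by positivity
    have hn : ((n : ℚ) + 1) ≠ 0 := by positivity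
    push_cast; field_simp; ring

lemma stmt2_id3 (n : ℕ) :
    ∑ k ∈ Finset.range n,
      (8 * (k : ℚ) ^ 2 + 4 * k + 1) * ((2 * k).choose k : ℚ) ^ 2 / (-16 : ℚ) ^ k
    = -(-1 : ℚ) ^ n * 4 * n ^ 2 * ((2 * n).choose n : ℚ) ^ 2 / 16 ^ n := by
  induction n with
  | zero => simp
  | succ n ih =>
    rw [Finset.sum_range_succ, ih, stmt2_cbq]
    have h4 : (16 : ℚ) ^ n ≠ 0 := by positivity
    have hn : ((n : ℚ) + 1) ≠ 0 := by positivity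
    have hneg : ((-16 : ℚ)) ^ n = (-1) ^ n * 16 ^ n := by rw [← neg_one_mul, mul_pow]
    rcases Nat.even_or_odd n with he | ho
    · simp only [hneg, he.neg_one_pow, (Even.add_one he).neg_one_pow]
      push_cast; field_simp; ring
    · simp only [hneg, ho.neg_one_pow, (Odd.add_one ho).neg_one_pow]
      push_cast; field_simp; ring

lemma stmt2_id4 (n : ℕ) :
    ∑ k ∈ Finset.range n,
      (3 * (4 * (k : ℚ) + 1) + (4 * (k : ℚ) + 1) ^ 3) * ((2 * k).choose k : ℚ) ^ 3 /
        (-64 : ℚ) ^ k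
    = -(-1 : ℚ) ^ n * 32 * n ^ 3 * ((2 * n).choose n : ℚ) ^ 3 / 64 ^ n := by
  induction n with
  | zero => simp
  | succ n ih =>
    rw [Finset.sum_range_succ, ih, stmt2_cbq]
    have h4 : (64 : ℚ) ^ n ≠ 0 := by positivity
    have hn : ((n : ℚ) + 1) ≠ 0 := by positivity
    have hneg : ((-64 : ℚ)) ^ n = (-1) ^ n * 64 ^ n := by rw [← neg_one_mul, mul_pow]
    rcases Nat.even_or_odd n with he | ho
    · simp only [hneg, he.neg_one_pow, (Even.add_one he).neg_one_pow]
      push_cast; field_simp; ring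
    · simp only [hneg, ho.neg_one_pow, (Odd.add_one ho).neg_one_pow]
      push_cast; field_simp; ring

lemma stmt2_id5 (n : ℕ) :
    ∑ k ∈ Finset.range n,
      (1 + 3 * (4 * (k : ℚ) + 1) ^ 2) * ((2 * k).choose k : ℚ) ^ 3 / (64 : ℚ) ^ k
    = 32 * n ^ 3 * ((2 * n).choose n : ℚ) ^ 3 / 64 ^ n := by
  induction n with
  | zero => simp
  | succ n ih =>
    rw [Finset.sum_range_succ, ih, stmt2_cbq]
    have h4 : (64 : ℚ) ^ n ≠ 0 := by positivity
    have hn : ((n : ℚ) + 1) ≠ 0 := by positivity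
    push_cast; field_simp; ring

lemma stmt2_id6 (n : ℕ) :
    ∑ k ∈ Finset.range n,
      ((4 * (k : ℚ) + 1) + (4 * (k : ℚ) + 1) ^ 3) * ((2 * k).choose k : ℚ) ^ 4 / (256 : ℚ) ^ k
    = 32 * n ^ 4 * ((2 * n).choose n : ℚ) ^ 4 / 256 ^ n := by
  induction n with
  | zero => simp
  | succ n ih =>
    rw [Finset.sum_range_succ, ih, stmt2_cbq]
    have h4 : (256 : ℚ) ^ n ≠ 0 := by positivity
    have hn : ((n : ℚ) + 1) ≠ 0 := by positivity
    push_cast; field_simp; ring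

lemma stmt2_id7 (n : ℕ) :
    ∑ k ∈ Finset.range n,
      (1 + 6 * (4 * (k : ℚ) + 1) ^ 2 + (4 * (k : ℚ) + 1) ^ 4) * ((2 * k).choose k : ℚ) ^ 4 /
        (-256 : ℚ) ^ k
    = -(-1 : ℚ) ^ n * 128 * n ^ 4 * ((2 * n).choose n : ℚ) ^ 4 / 256 ^ n := by
  induction n with
  | zero => simp
  | succ n ih =>
    rw [Finset.sum_range_succ, ih, stmt2_cbq]
    have h4 : (256 : ℚ) ^ n ≠ 0 := by positivity
    have hn : ((n : ℚ) + 1) ≠ 0 := by positivity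
    have hneg : ((-256 : ℚ)) ^ n = (-1) ^ n * 256 ^ n := by rw [← neg_one_mul, mul_pow]
    rcases Nat.even_or_odd n with he | ho
    · simp only [hneg, he.neg_one_pow, (Even.add_one he).neg_one_pow]
      push_cast; field_simp; ring
    · simp only [hneg, ho.neg_one_pow, (Odd.add_one ho).neg_one_pow]
      push_cast; field_simp; ring

lemma stmt2_isPInt_intdiv (p : ℕ) (hp : p.Prime) (hp2 : p ≠ 2) (M : ℤ) (m : ℕ) :
    isPInt p ((M : ℚ) / (4 : ℚ) ^ m) := by
  intro h
  have h4 : ((M : ℚ) / (4 : ℚ) ^ m) = (M : ℚ) / (((4 : ℤ) ^ m : ℤ) : ℚ) := by push_cast; ring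
  have hden : ((((M : ℚ) / (4 : ℚ) ^ m).den : ℤ)) ∣ (4 : ℤ) ^ m := by
    rw [h4, ← Rat.divInt_eq_div]
    exact Rat.den_dvd _ _
  have hpd : (p : ℤ) ∣ (4 : ℤ) ^ m := dvd_trans (Int.natCast_dvd_natCast.2 h) hden
  have hpd' : p ∣ 4 ^ m := by exact_mod_cast hpd
  have h2 : p ∣ 2 := hp.dvd_of_dvd_pow (by
    have : p ∣ (2:ℕ)^2 := by norm_num at hpd' ⊢; exact hp.dvd_of_dvd_pow hpd'
    exact this)
  exact hp2 ((Nat.prime_dvd_prime_iff_eq hp Nat.prime_two).1 h2)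

lemma stmt2_fermat2 (p : ℕ) (hp : p.Prime) (hp2 : p ≠ 2) : (p : ℤ) ∣ 2 ^ (p - 1) - 1 := by
  haveI := Fact.mk hp
  have h2 : (2 : ZMod p) ≠ 0 := by
    intro h
    have hd : p ∣ 2 := (ZMod.natCast_eq_zero_iff 2 p).1 (by exact_mod_cast h)
    exact hp2 ((Nat.prime_dvd_prime_iff_eq hp Nat.prime_two).1 hd)
  have hfl := ZMod.pow_card_sub_one_eq_one h2
  have h0 : ((2 ^ (p - 1) - 1 : ℤ) : ZMod p) = 0 := by push_cast [hfl]; ring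
  exact (ZMod.intCast_zmod_eq_zero_iff_dvd _ p).1 h0

lemma stmt2_vandermonde2 (p : ℕ) (hp : p.Prime) :
    (p : ℤ) ^ 2 ∣ ((2 * p).choose p : ℤ) - 2 := by
  have hv : (2 * p).choose p = ∑ k ∈ Finset.range (p + 1), p.choose k * p.choose (p - k) := by
    rw [two_mul, Nat.add_choose_eq, Finset.Nat.sum_antidiagonal_eq_sum_range_succ_mk]
  have hp1 : p = (p - 1) + 1 := (Nat.succ_pred_eq_of_pos hp.pos).symm
  have key : ((2 * p).choose p : ℤ) - 2 =
      ∑ k ∈ Finset.range (p - 1), (p.choose (k + 1) : ℤ) * (p.choose (p - (k + 1)) : ℤ) := by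
    rw [hv]
    push_cast
    rw [Finset.sum_range_succ]
    rw [show Finset.range p = Finset.range ((p - 1) + 1) from by rw [← hp1],
      Finset.sum_range_succ']
    simp [Nat.choose_self, Nat.choose_zero_right, Nat.sub_self]
    ring
  rw [key]
  refine Finset.dvd_sum fun k hk => ?_
  rw [Finset.mem_range] at hk
  have h1 : p ∣ p.choose (k + 1) :=
    Nat.Prime.dvd_choose_self hp (Nat.succ_ne_zero k) (by omega)
  have h2 : p ∣ p.choose (p - (k + 1)) :=
    Nat.Prime.dvd_choose_self hp (by omega) (by omega)
  rw [pow_two]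
  exact mul_dvd_mul (Int.natCast_dvd_natCast.2 h1) (Int.natCast_dvd_natCast.2 h2)

lemma stmt2_powsplit (j p : ℕ) : ((2:ℤ)^(2*j))^p = ((2:ℤ)^p)^(2*j) := by
  rw [← pow_mul, ← pow_mul, mul_comm]

end StmtTwoAux


theorem stmt2 (p : ℕ) (hp : p.Prime) (hp2 : p ≠ 2) :
    ratModEq p 3
      (∑ k ∈ Finset.range p, (4 * (k : ℚ) + 1) * ((2 * k).choose k : ℚ) / (-4 : ℚ) ^ k)
      ((3 - 2 ^ p) * p) ∧
    ratModEq p 4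
      (∑ k ∈ Finset.range p, (4 * (k : ℚ) + 1) * ((2 * k).choose k : ℚ) ^ 2 / (16 : ℚ) ^ k)
      ((5 - 2 ^ (p + 1)) * p ^ 2) ∧
    ratModEq p 4
      (∑ k ∈ Finset.range p,
        (8 * (k : ℚ) ^ 2 + 4 * k + 1) * ((2 * k).choose k : ℚ) ^ 2 / (-16 : ℚ) ^ k)
      ((5 - 2 ^ (p + 1)) * p ^ 2) ∧
    ratModEq p 5
      (∑ k ∈ Finset.range p,
        (3 * (4 * (k : ℚ) + 1) + (4 * (k : ℚ) + 1) ^ 3) * ((2 * k).choose k : ℚ) ^ 3 /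
          (-64 : ℚ) ^ k)
      (4 * (7 - 6 * 2 ^ (p - 1)) * p ^ 3) ∧
    ratModEq p 5
      (∑ k ∈ Finset.range p,
        (1 + 3 * (4 * (k : ℚ) + 1) ^ 2) * ((2 * k).choose k : ℚ) ^ 3 / (64 : ℚ) ^ k)
      (4 * (7 - 6 * 2 ^ (p - 1)) * p ^ 3) ∧
    ratModEq p 6
      (4 * ∑ k ∈ Finset.range p,
        ((4 * (k : ℚ) + 1) + (4 * (k : ℚ) + 1) ^ 3) * ((2 * k).choose k : ℚ) ^ 4 / (256 : ℚ) ^ k)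
      (8 * (9 - 2 ^ (p + 2)) * p ^ 4) ∧
    ratModEq p 6
      (∑ k ∈ Finset.range p,
        (1 + 6 * (4 * (k : ℚ) + 1) ^ 2 + (4 * (k : ℚ) + 1) ^ 4) * ((2 * k).choose k : ℚ) ^ 4 /
          (-256 : ℚ) ^ k)
      (8 * (9 - 2 ^ (p + 2)) * p ^ 4) := by
  have hodd : Odd p := hp.odd_of_ne_two hp2
  have hs : (-1 : ℚ) ^ p = -1 := hodd.neg_one_pow
  have hp0 : (p : ℚ) ≠ 0 := Nat.cast_ne_zero.2 hp.pos.ne'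
  have hB := stmt2_vandermonde2 p hp
  have hA := stmt2_fermat2 p hp hp2
  set B : ℤ := ((2 * p).choose p : ℤ) with hBdef
  set A : ℤ := 2 ^ (p - 1) - 1 with hAdef
  have hA2 : (p : ℤ) ^ 2 ∣ A ^ 2 := pow_dvd_pow_of_dvd hA 2
  have h2p : (2 : ℤ) ^ p = 2 * (A + 1) := by
    have h : (2 : ℤ) ^ p = 2 ^ (p - 1) * 2 := by
      conv_lhs => rw [show p = (p - 1) + 1 from (Nat.succ_pred_eq_of_pos hp.pos).symm]
      rw [pow_succ]
    rw [h, hAdef]; ring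
  have h4p : (4 : ℤ) ^ p = (2 * (A + 1)) ^ 2 := by
    rw [show (4 : ℤ) = 2 ^ (2 * 1) by norm_num, stmt2_powsplit, h2p]
  have h16p : (16 : ℤ) ^ p = (2 * (A + 1)) ^ 4 := by
    rw [show (16 : ℤ) = 2 ^ (2 * 2) by norm_num, stmt2_powsplit, h2p]
  have h64p : (64 : ℤ) ^ p = (2 * (A + 1)) ^ 6 := by
    rw [show (64 : ℤ) = 2 ^ (2 * 3) by norm_num, stmt2_powsplit, h2p]
  have h256p : (256 : ℤ) ^ p = (2 * (A + 1)) ^ 8 := by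
    rw [show (256 : ℤ) = 2 ^ (2 * 4) by norm_num, stmt2_powsplit, h2p]
  have h2pm : (2 : ℤ) ^ (p - 1) = A + 1 := by rw [hAdef]; ring
  have h2p1 : (2 : ℤ) ^ (p + 1) = 2 * (A + 1) * 2 := by rw [pow_succ, h2p]
  have h2p2 : (2 : ℤ) ^ (p + 2) = 2 * (A + 1) * 4 := by rw [pow_add, h2p]; ring
  obtain ⟨M1, hM1⟩ : (p : ℤ) ^ 2 ∣ 2 * B - (3 - 2 ^ p) * 4 ^ p := by
    have e : 2 * B - (3 - 2 ^ p) * 4 ^ p = (B - 2) * 2 + A ^ 2 * (4 * (3 + 2 * A)) := by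
      rw [h4p, h2p]; ring
    rw [e]; exact dvd_add (hB.mul_right _) (hA2.mul_right _)
  obtain ⟨M2, hM2⟩ : (p : ℤ) ^ 2 ∣ 4 * B ^ 2 - (5 - 2 ^ (p + 1)) * 16 ^ p := by
    have e : 4 * B ^ 2 - (5 - 2 ^ (p + 1)) * 16 ^ p
        = (B - 2) * (4 * (B + 2)) + A ^ 2 * (16 * (10 + 20 * A + 15 * A ^ 2 + 4 * A ^ 3)) := by
      rw [h16p, h2p1]; ring
    rw [e]; exact dvd_add (hB.mul_right _) (hA2.mul_right _)
  obtain ⟨M3, hM3⟩ : (p : ℤ) ^ 2 ∣ 8 * B ^ 3 - (7 - 6 * 2 ^ (p - 1)) * 64 ^ p := by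
    have e : 8 * B ^ 3 - (7 - 6 * 2 ^ (p - 1)) * 64 ^ p
        = (B - 2) * (8 * (B ^ 2 + 2 * B + 4))
          + A ^ 2 * (64 * (21 + 70 * A + 105 * A ^ 2 + 84 * A ^ 3 + 35 * A ^ 4 + 6 * A ^ 5)) := by
      rw [h64p, h2pm]; ring
    rw [e]; exact dvd_add (hB.mul_right _) (hA2.mul_right _)
  obtain ⟨M4, hM4⟩ : (p : ℤ) ^ 2 ∣ 16 * B ^ 4 - (9 - 2 ^ (p + 2)) * 256 ^ p := by
    have e : 16 * B ^ 4 - (9 - 2 ^ (p + 2)) * 256 ^ p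
        = (B - 2) * (16 * (B ^ 3 + 2 * B ^ 2 + 4 * B + 8))
          + A ^ 2 * (256 * (36 + 168 * A + 378 * A ^ 2 + 504 * A ^ 3 + 420 * A ^ 4
            + 216 * A ^ 5 + 63 * A ^ 6 + 8 * A ^ 7)) := by
      rw [h256p, h2p2]; ring
    rw [e]; exact dvd_add (hB.mul_right _) (hA2.mul_right _)
  rw [hBdef] at hM1 hM2 hM3 hM4
  have hQ1 : 2 * ((2 * p).choose p : ℚ) - (3 - (2 : ℚ) ^ p) * 4 ^ p = (p : ℚ) ^ 2 * M1 := by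
    exact_mod_cast hM1
  have hQ2 : 4 * ((2 * p).choose p : ℚ) ^ 2 - (5 - (2 : ℚ) ^ (p + 1)) * 16 ^ p
      = (p : ℚ) ^ 2 * M2 := by exact_mod_cast hM2
  have hQ3 : 8 * ((2 * p).choose p : ℚ) ^ 3 - (7 - 6 * (2 : ℚ) ^ (p - 1)) * 64 ^ p
      = (p : ℚ) ^ 2 * M3 := by exact_mod_cast hM3
  have hQ4 : 16 * ((2 * p).choose p : ℚ) ^ 4 - (9 - (2 : ℚ) ^ (p + 2)) * 256 ^ p
      = (p : ℚ) ^ 2 * M4 := by exact_mod_cast hM4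
  have h16 : (16 : ℚ) ^ p = 4 ^ (2 * p) := by
    rw [show (16 : ℚ) = 4 ^ 2 by norm_num, ← pow_mul]
  have h64 : (64 : ℚ) ^ p = 4 ^ (3 * p) := by
    rw [show (64 : ℚ) = 4 ^ 3 by norm_num, ← pow_mul]
  have h256 : (256 : ℚ) ^ p = 4 ^ (4 * p) := by
    rw [show (256 : ℚ) = 4 ^ 4 by norm_num, ← pow_mul]
  rw [h16] at hQ2
  rw [h64] at hQ3
  rw [h256] at hQ4
  refine ⟨?_, ?_, ?_, ?_, ?_, ?_, ?_⟩
  · show isPInt p _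
    have e : ((∑ k ∈ Finset.range p,
          (4 * (k : ℚ) + 1) * ((2 * k).choose k : ℚ) / (-4 : ℚ) ^ k)
        - (3 - 2 ^ p) * p) / (p : ℚ) ^ 3 = (M1 : ℚ) / 4 ^ p := by
      rw [stmt2_id1 p, hs]
      field_simp
      linear_combination hQ1
    rw [e]
    exact stmt2_isPInt_intdiv p hp hp2 M1 p
  · show isPInt p _
    have e : ((∑ k ∈ Finset.range p,
          (4 * (k : ℚ) + 1) * ((2 * k).choose k : ℚ) ^ 2 / (16 : ℚ) ^ k)
        - (5 - 2 ^ (p + 1)) * p ^ 2) / (p : ℚ) ^ 4 = (M2 : ℚ) / 4 ^ (2 * p) := by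
      rw [stmt2_id2 p, h16]
      field_simp
      linear_combination hQ2
    rw [e]
    exact stmt2_isPInt_intdiv p hp hp2 M2 (2 * p)
  · show isPInt p _
    have e : ((∑ k ∈ Finset.range p,
          (8 * (k : ℚ) ^ 2 + 4 * k + 1) * ((2 * k).choose k : ℚ) ^ 2 / (-16 : ℚ) ^ k)
        - (5 - 2 ^ (p + 1)) * p ^ 2) / (p : ℚ) ^ 4 = (M2 : ℚ) / 4 ^ (2 * p) := by
      rw [stmt2_id3 p, hs, h16]
      field_simp
      linear_combination hQ2
    rw [e]
    exact stmt2_isPInt_intdiv p hp hp2 M2 (2 * p)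
  · show isPInt p _
    have e : ((∑ k ∈ Finset.range p,
          (3 * (4 * (k : ℚ) + 1) + (4 * (k : ℚ) + 1) ^ 3) * ((2 * k).choose k : ℚ) ^ 3 /
            (-64 : ℚ) ^ k)
        - 4 * (7 - 6 * 2 ^ (p - 1)) * p ^ 3) / (p : ℚ) ^ 5 = ((4 * M3 : ℤ) : ℚ) / 4 ^ (3 * p) := by
      push_cast
      rw [stmt2_id4 p, hs, h64]
      field_simp
      linear_combination 4 * hQ3
    rw [e]
    exact stmt2_isPInt_intdiv p hp hp2 (4 * M3) (3 * p)
  · show isPInt p _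
    have e : ((∑ k ∈ Finset.range p,
          (1 + 3 * (4 * (k : ℚ) + 1) ^ 2) * ((2 * k).choose k : ℚ) ^ 3 / (64 : ℚ) ^ k)
        - 4 * (7 - 6 * 2 ^ (p - 1)) * p ^ 3) / (p : ℚ) ^ 5 = ((4 * M3 : ℤ) : ℚ) / 4 ^ (3 * p) := by
      push_cast
      rw [stmt2_id5 p, h64]
      field_simp
      linear_combination 4 * hQ3
    rw [e]
    exact stmt2_isPInt_intdiv p hp hp2 (4 * M3) (3 * p)
  · show isPInt p _
    have e : ((4 * ∑ k ∈ Finset.range p,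
          ((4 * (k : ℚ) + 1) + (4 * (k : ℚ) + 1) ^ 3) * ((2 * k).choose k : ℚ) ^ 4 /
            (256 : ℚ) ^ k)
        - 8 * (9 - 2 ^ (p + 2)) * p ^ 4) / (p : ℚ) ^ 6 = ((8 * M4 : ℤ) : ℚ) / 4 ^ (4 * p) := by
      push_cast
      rw [stmt2_id6 p, h256]
      field_simp
      linear_combination 8 * hQ4
    rw [e]
    exact stmt2_isPInt_intdiv p hp hp2 (8 * M4) (4 * p)
  · show isPInt p _
    have e : ((∑ k ∈ Finset.range p,
          (1 + 6 * (4 * (k : ℚ) + 1) ^ 2 + (4 * (k : ℚ) + 1) ^ 4) * ((2 * k).choose k : ℚ) ^ 4 /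
            (-256 : ℚ) ^ k)
        - 8 * (9 - 2 ^ (p + 2)) * p ^ 4) / (p : ℚ) ^ 6 = ((8 * M4 : ℤ) : ℚ) / 4 ^ (4 * p) := by
      push_cast
      rw [stmt2_id7 p, hs, h256]
      field_simp
      linear_combination 8 * hQ4
    rw [e]
    exact stmt2_isPInt_intdiv p hp hp2 (8 * M4) (4 * p)
end

section
/- Let p be an odd prime and let a ∈ ℤ_p with a ≢ −1 (mod p). Define C_p(a) = ∑_{k=0}^{p−1} (a − 2k) binom(a,k)³. Then C_p(a) + C_p(a+1) ≡ 2(a − ⟨a⟩_p)³ / (⟨a⟩_p + 1)² (mod p⁴). -/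
section Aux
open Finset

lemma ratBinom_succ (a : ℚ) (k : ℕ) :
    ratBinom a (k + 1) * (k + 1) = ratBinom a k * (a - k) := by
  have hk : (k.factorial : ℚ) ≠ 0 := Nat.cast_ne_zero.mpr k.factorial_ne_zero
  have hk1 : ((k:ℚ) + 1) ≠ 0 := by positivity
  simp only [ratBinom, Finset.prod_range_succ, Nat.factorial_succ]
  push_cast
  field_simp

lemma ratBinom_shift (a : ℚ) (k : ℕ) :
    ratBinom (a + 1) k * (a + 1 - k) = ratBinom a k * (a + 1) := by
  have key : (∏ i ∈ Finset.range k, (a + 1 - i)) * (a + 1 - k)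
      = (∏ i ∈ Finset.range k, (a - i)) * (a + 1) := by
    have h1 : (∏ i ∈ Finset.range (k+1), (a + 1 - i))
        = (∏ i ∈ Finset.range k, (a + 1 - i)) * (a + 1 - k) := by
      rw [Finset.prod_range_succ]
    have h2 : (∏ i ∈ Finset.range (k+1), (a + 1 - i))
        = (∏ i ∈ Finset.range k, (a - i)) * (a + 1) := by
      rw [Finset.prod_range_succ']
      congr 1
      · apply Finset.prod_congr rfl; intro i _; push_cast; ring
      · norm_num
    rw [← h1, h2]
  simp only [ratBinom]
  rw [div_mul_eq_mul_div, div_mul_eq_mul_div, key]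

private lemma telstep (a m s B : ℚ) (hm : a + 1 - m ≠ 0) (hm1 : a - m ≠ 0) (hmc : m + 1 ≠ 0)
    (hs : s = B ^ 3 * m ^ 3 * (2 * a + 2 - m) / (a + 1 - m) ^ 3) :
    s + ((a - 2 * m) * B ^ 3 + (a + 1 - 2 * m) * (B * (a + 1) / (a + 1 - m)) ^ 3) =
      (B * (a - m) / (m + 1)) ^ 3 * (m + 1) ^ 3 * (2 * a + 2 - (m + 1)) / (a + 1 - (m + 1)) ^ 3 := by
  subst hs
  have h2 : a + 1 - (m + 1) ≠ 0 := by intro hz; apply hm1; linarith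
  field_simp
  ring

theorem tel (a : ℚ) (m : ℕ) (h : ∀ k : ℕ, k ≤ m → a + 1 - (k : ℚ) ≠ 0) :
    ((∑ k ∈ Finset.range m, (a - 2 * k) * ratBinom a k ^ 3) +
      ∑ k ∈ Finset.range m, ((a + 1) - 2 * k) * ratBinom (a + 1) k ^ 3)
    = ratBinom a m ^ 3 * (m : ℚ) ^ 3 * (2 * a + 2 - m) / (a + 1 - m) ^ 3 := by
  induction m with
  | zero => simp
  | succ m ih =>
    have hm : a + 1 - (m : ℚ) ≠ 0 := h m (Nat.le_succ m)
    have hm1 : a + 1 - ((m : ℚ) + 1) ≠ 0 := by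
      have := h (m + 1) le_rfl; push_cast at this ⊢; exact this
    have ham : a - (m:ℚ) ≠ 0 := by intro hz; apply hm1; linarith [sub_eq_zero.mp hz]
    have hmc : ((m : ℚ) + 1) ≠ 0 := by positivity
    have ih' := ih (fun k hk => h k (hk.trans (Nat.le_succ m)))
    rw [Finset.sum_range_succ, Finset.sum_range_succ]
    have e1 : ratBinom a (m + 1) = ratBinom a m * (a - m) / ((m : ℚ) + 1) := by
      rw [eq_div_iff hmc]
      have := ratBinom_succ a m
      push_cast at this ⊢
      linarith [this]
    have e2 : ratBinom (a + 1) m = ratBinom a m * (a + 1) / (a + 1 - m) := by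
      rw [eq_div_iff hm]
      exact ratBinom_shift a m
    rw [e1, e2]
    have key := telstep a (m : ℚ)
      ((∑ k ∈ Finset.range m, (a - 2 * k) * ratBinom a k ^ 3) +
        ∑ k ∈ Finset.range m, ((a + 1) - 2 * k) * ratBinom (a + 1) k ^ 3)
      (ratBinom a m) hm ham hmc ih'
    push_cast
    linear_combination key

lemma ratBinom_natCast (N k : ℕ) : ratBinom (N : ℚ) k = (N.choose k : ℚ) := by
  induction k with
  | zero => simp [ratBinom]
  | succ k ih =>
    by_cases hk : k < N
    · have hkc : ((k:ℚ) + 1) ≠ 0 := by positivity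
      have hrec := ratBinom_succ (N : ℚ) k
      have hch := Nat.choose_succ_right_eq N k
      have hch' : (N.choose (k+1) : ℚ) * ((k:ℚ) + 1) = (N.choose k : ℚ) * ((N:ℚ) - k) := by
        have : ((N - k : ℕ) : ℚ) = (N : ℚ) - k := by
          rw [Nat.cast_sub hk.le]
        rw [← this]
        exact_mod_cast congrArg (Nat.cast : ℕ → ℚ) hch
      have : ratBinom (N:ℚ) (k+1) * ((k:ℚ)+1) = (N.choose (k+1) : ℚ) * ((k:ℚ)+1) := by
        rw [hch']
        push_cast at hrec
        rw [hrec, ih]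
      exact mul_right_cancel₀ hkc this
    · push_neg at hk
      have h1 : ratBinom (N:ℚ) (k+1) = 0 := by
        unfold ratBinom
        rw [Finset.prod_eq_zero (Finset.mem_range.mpr (Nat.lt_succ_of_le hk) : N ∈ Finset.range (k+1))]
        · simp
        · simp
      have h2 : N.choose (k+1) = 0 := Nat.choose_eq_zero_of_lt (Nat.lt_succ_of_le hk)
      rw [h1, h2]; simp

lemma sum_zero_int (N P : ℕ) (h : N < P) :
    ∑ k ∈ Finset.range P, ((N : ℚ) - 2 * k) * ratBinom (N : ℚ) k ^ 3 = 0 := by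
  simp only [ratBinom_natCast]
  have hsub : ∑ k ∈ Finset.range P, ((N : ℚ) - 2 * k) * (N.choose k : ℚ) ^ 3
      = ∑ k ∈ Finset.range (N + 1), ((N : ℚ) - 2 * k) * (N.choose k : ℚ) ^ 3 := by
    symm
    apply Finset.sum_subset (Finset.range_subset_range.mpr h)
    intro x _ hx
    rw [Finset.mem_range, not_lt] at hx
    rw [Nat.choose_eq_zero_of_lt hx]
    simp
  rw [hsub]
  set S := ∑ k ∈ Finset.range (N + 1), ((N : ℚ) - 2 * k) * (N.choose k : ℚ) ^ 3 with hS
  have hrefl : S = ∑ k ∈ Finset.range (N + 1),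
      ((N : ℚ) - 2 * ((N + 1 - 1 - k : ℕ) : ℚ)) * (N.choose (N + 1 - 1 - k) : ℚ) ^ 3 := by
    rw [hS, ← Finset.sum_range_reflect]
  have hneg : S = -S := by
    nth_rewrite 1 [hrefl]
    rw [hS, ← Finset.sum_neg_distrib]
    apply Finset.sum_congr rfl
    intro k hk
    rw [Finset.mem_range, Nat.lt_succ_iff] at hk
    have h1 : N + 1 - 1 - k = N - k := by omega
    rw [h1, Nat.choose_symm hk, Nat.cast_sub hk]
    ring
  linarith

lemma isPInt_iff (p : ℕ) [hp : Fact p.Prime] (x : ℚ) : isPInt p x ↔ ‖(x : ℚ_[p])‖ ≤ 1 := by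
  constructor
  · exact fun h => Padic.norm_rat_le_one h
  · intro h hdvd
    by_cases hx : x = 0
    · rw [hx] at hdvd
      simp only [Rat.den_ofNat] at hdvd
      exact hp.out.one_lt.ne' (Nat.eq_one_of_dvd_one hdvd)
    · have hnum : ¬ (p : ℤ) ∣ x.num := by
        intro hd
        have h1 : p ∣ x.num.natAbs := by
          have := Int.natAbs_dvd_natAbs.mpr hd
          simpa using this
        have := Nat.Coprime.eq_one_of_dvd (Nat.Coprime.coprime_dvd_left h1 x.reduced) hdvd
        exact hp.out.ne_one this
      have hden0 : ((x.den : ℕ) : ℚ_[p]) ≠ 0 := Nat.cast_ne_zero.mpr x.den_nz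
      have hcast : (x : ℚ_[p]) * (x.den : ℚ_[p]) = (x.num : ℚ_[p]) := by
        rw [Rat.cast_def, div_mul_cancel₀ _ hden0]
      have h1 : ‖((x.num : ℤ) : ℚ_[p])‖ = 1 := by
        refine le_antisymm (Padic.norm_int_le_one _) ?_
        by_contra hlt
        push_neg at hlt
        exact hnum (Padic.norm_intCast_lt_one_iff.mp hlt)
      have h2 : ‖((x.den : ℤ) : ℚ_[p])‖ < 1 := by
        rw [Padic.norm_intCast_lt_one_iff]
        exact_mod_cast Int.natCast_dvd_natCast.mpr hdvd
      have h3 : ‖(x : ℚ_[p]) * (x.den : ℚ_[p])‖ < 1 := by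
        rw [norm_mul]
        calc ‖(x : ℚ_[p])‖ * ‖((x.den : ℕ) : ℚ_[p])‖ ≤ 1 * ‖((x.den : ℕ) : ℚ_[p])‖ := by
              apply mul_le_mul_of_nonneg_right h (norm_nonneg _)
          _ = ‖((x.den : ℤ) : ℚ_[p])‖ := by push_cast; ring_nf
          _ < 1 := h2
      rw [hcast] at h3
      have h4 : ‖((x.num : ℤ) : ℚ_[p])‖ < 1 := by exact_mod_cast h3
      rw [h1] at h4
      exact lt_irrefl 1 h4

lemma norm_natCast_eq_one (p : ℕ) [Fact p.Prime] (m : ℕ) (h : ¬ p ∣ m) :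
    ‖(m : ℚ_[p])‖ = 1 := by
  have h1 : ‖((m : ℤ) : ℚ_[p])‖ ≤ 1 := Padic.norm_int_le_one _
  have h2 : ¬ ‖((m : ℤ) : ℚ_[p])‖ < 1 := by
    rw [Padic.norm_intCast_lt_one_iff]
    exact_mod_cast fun hd => h (Int.ofNat_dvd.mp hd)
  push_cast at h1 h2
  linarith [lt_or_ge (‖(m : ℚ_[p])‖) 1]

lemma zmod_prod_lemma (p : ℕ) [NeZero p] (n : ℕ) (hn : n < p) :
    ∏ i ∈ (Finset.range p).erase n, ((n : ZMod p) - (i : ZMod p))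
      = ∏ j ∈ (Finset.range p).erase 0, ((j : ZMod p)) := by
  have hp0 : 0 < p := Nat.pos_of_ne_zero (NeZero.ne p)
  refine Finset.prod_nbij' (fun i => if i ≤ n then n - i else n + p - i)
    (fun j => if j ≤ n then n - j else n + p - j) ?_ ?_ ?_ ?_ ?_
  · intro i hi
    rw [Finset.mem_erase, Finset.mem_range] at hi
    simp only [Finset.mem_erase, Finset.mem_range]
    rcases hi with ⟨h1, h2⟩
    by_cases hle : i ≤ n <;> simp only [hle, if_true, if_false, if_neg, if_pos] <;> omega
  · intro j hj
    rw [Finset.mem_erase, Finset.mem_range] at hj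
    simp only [Finset.mem_erase, Finset.mem_range]
    rcases hj with ⟨h1, h2⟩
    by_cases hle : j ≤ n <;> simp only [hle, if_true, if_false] <;> omega
  · intro i hi
    rw [Finset.mem_erase, Finset.mem_range] at hi
    rcases hi with ⟨h1, h2⟩
    by_cases hle : i ≤ n
    · simp only [hle, if_true]
      have : n - i ≤ n := by omega
      simp only [this, if_true]; omega
    · simp only [hle, if_false]
      have : ¬ (n + p - i ≤ n) := by omega
      simp only [this, if_false]; omega
  · intro j hj
    rw [Finset.mem_erase, Finset.mem_range] at hj
    rcases hj with ⟨h1, h2⟩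
    by_cases hle : j ≤ n
    · simp only [hle, if_true]
      have : n - j ≤ n := by omega
      simp only [this, if_true]; omega
    · simp only [hle, if_false]
      have : ¬ (n + p - j ≤ n) := by omega
      simp only [this, if_false]; omega
  · intro i hi
    rw [Finset.mem_erase, Finset.mem_range] at hi
    rcases hi with ⟨h1, h2⟩
    by_cases hle : i ≤ n
    · simp only [hle, if_true]
      rw [Nat.cast_sub hle]
    · simp only [hle, if_false]
      rw [show ((n + p - i : ℕ) : ZMod p) = ((n : ZMod p) + (p : ZMod p) - i) by
        rw [Nat.cast_sub (by omega : i ≤ n + p)]; push_cast; ring]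
      rw [ZMod.natCast_self]
      ring

lemma prod_erase_zero_eq_factorial (p : ℕ) [NeZero p] :
    ∏ j ∈ (Finset.range p).erase 0, ((j : ZMod p)) = (((p - 1).factorial : ℕ) : ZMod p) := by
  have hp0 : 0 < p := Nat.pos_of_ne_zero (NeZero.ne p)
  rw [← Finset.prod_range_add_one_eq_factorial, Nat.cast_prod]
  refine Finset.prod_nbij' (fun i => i - 1) (fun j => j + 1) ?_ ?_ ?_ ?_ ?_
  · intro i hi; rw [Finset.mem_erase, Finset.mem_range] at hi; rw [Finset.mem_range]; omega
  · intro j hj; rw [Finset.mem_range] at hj; rw [Finset.mem_erase, Finset.mem_range]; omega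
  · intro i hi; rw [Finset.mem_erase, Finset.mem_range] at hi; omega
  · intro j hj; rw [Finset.mem_range] at hj; omega
  · intro i hi
    rw [Finset.mem_erase, Finset.mem_range] at hi
    congr 1
    omega

end Aux

theorem stmt10 (p : ℕ) (hp : p.Prime) (hp2 : p ≠ 2)
    (a : ℚ) (hap : isPInt p a) (ha1 : ¬ ratModEq p 1 a (-1))
    (n : ℕ) (hnp : n < p) (han : ratModEq p 1 a (n : ℚ)) :
    ratModEq p 4
      ((∑ k ∈ Finset.range p, (a - 2 * k) * ratBinom a k ^ 3) +
        ∑ k ∈ Finset.range p, ((a + 1) - 2 * k) * ratBinom (a + 1) k ^ 3)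
      (2 * (a - n) ^ 3 / ((n : ℚ) + 1) ^ 2) := by
  haveI hfact : Fact p.Prime := ⟨hp⟩
  haveI : NeZero p := ⟨hp.pos.ne'⟩
  have hpQ : (p : ℚ) ≠ 0 := Nat.cast_ne_zero.mpr hp.pos.ne'
  have hpK : (p : ℚ_[p]) ≠ 0 := Nat.cast_ne_zero.mpr hp.pos.ne'
  have ha : ‖(a : ℚ_[p])‖ ≤ 1 := (isPInt_iff p a).mp hap
  set tq : ℚ := (a - (n : ℚ)) / (p : ℚ) with htqdef
  have ht : ‖(tq : ℚ_[p])‖ ≤ 1 := by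
    have h' := han
    unfold ratModEq at h'
    rw [isPInt_iff, pow_one] at h'
    exact h'
  -- n + 1 < p
  have hn1 : n + 1 < p := by
    by_contra hcon
    have hnp1 : (n : ℚ) = (p : ℚ) - 1 := by
      have : n + 1 = p := by omega
      rw [← this]; push_cast; ring
    apply ha1
    unfold ratModEq
    rw [isPInt_iff, pow_one]
    have heq : ((a - (-1)) / (p : ℚ)) = tq + 1 := by
      rw [htqdef, hnp1]; field_simp; ring
    rw [heq]
    push_cast
    calc ‖(tq : ℚ_[p]) + 1‖ ≤ max ‖(tq : ℚ_[p])‖ ‖(1 : ℚ_[p])‖ := Padic.nonarchimedean _ _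
      _ ≤ 1 := by rw [norm_one]; exact max_le ht le_rfl
  by_cases hane : a = (n : ℚ)
  · -- degenerate case : a is the integer n
    have hz1 : (∑ k ∈ Finset.range p, (a - 2 * k) * ratBinom a k ^ 3) = 0 := by
      rw [hane]; exact sum_zero_int n p hnp
    have hz2 : (∑ k ∈ Finset.range p, ((a + 1) - 2 * k) * ratBinom (a + 1) k ^ 3) = 0 := by
      rw [hane]
      have hcast : ((n : ℚ) + 1) = ((n + 1 : ℕ) : ℚ) := by push_cast; ring
      rw [hcast]
      exact sum_zero_int (n + 1) p hn1
    rw [ratModEq, hz1, hz2, hane]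
    simp only [sub_self]
    norm_num
    unfold isPInt
    simp only [Rat.den_ofNat]
    intro hd
    exact hp.one_lt.ne' (Nat.eq_one_of_dvd_one hd)
  · -- main case
    have hden : ∀ k : ℕ, k ≤ p → a + 1 - (k : ℚ) ≠ 0 := by
      intro k hk heq0
      rcases Nat.eq_zero_or_pos k with hk0 | hk1
      · rw [hk0] at heq0
        push_cast at heq0
        have hm1 : a = -1 := by linarith
        apply ha1
        unfold ratModEq
        rw [isPInt_iff, pow_one, hm1]
        norm_num
      · -- a = k - 1 is a nonneg integer < p ; then a = n, contradiction
        set z : ℤ := (k : ℤ) - 1 - (n : ℤ) with hzdef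
        have hza : ((z : ℤ) : ℚ) = a - (n : ℚ) := by
          rw [hzdef]; push_cast; linarith
        have hnormz : ‖((z : ℤ) : ℚ_[p])‖ < 1 := by
          have h1 : ((z : ℤ) : ℚ_[p]) = ((a - (n:ℚ) : ℚ) : ℚ_[p]) := by
            exact_mod_cast congrArg (fun x : ℚ => (x : ℚ_[p])) hza
          have h2 : ((a - (n:ℚ) : ℚ) : ℚ_[p]) = (p : ℚ_[p]) * (tq : ℚ_[p]) := by
            rw [htqdef]; push_cast; field_simp
          rw [h1, h2, norm_mul, Padic.norm_p]
          calc ((p:ℝ))⁻¹ * ‖(tq : ℚ_[p])‖ ≤ ((p:ℝ))⁻¹ * 1 := by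
                apply mul_le_mul_of_nonneg_left ht (by positivity)
            _ < 1 := by
                rw [mul_one, inv_lt_one_iff₀]
                right
                exact_mod_cast hp.one_lt
        have hdvd : (p : ℤ) ∣ z := (Padic.norm_intCast_lt_one_iff (k := z)).mp hnormz
        have hzabs : z.natAbs < p := by omega
        have : z = 0 := by
          rcases Nat.eq_zero_or_pos z.natAbs with h0 | hpos
          · omega
          · exfalso
            have hd : p ∣ z.natAbs := by
              have := Int.natAbs_dvd_natAbs.mpr hdvd
              simpa using this
            have := Nat.le_of_dvd hpos hd
            omega
        apply hane
        have : a - (n:ℚ) = 0 := by rw [← hza, this]; norm_num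
        linarith
    -- telescoping
    have htel := tel a p hden
    set Q : ℚ := ∏ i ∈ (Finset.range p).erase n, (a - (i : ℚ)) with hQdef
    have hBp : ratBinom a p = (a - (n : ℚ)) * Q / (p.factorial : ℚ) := by
      unfold ratBinom
      rw [← Finset.mul_prod_erase (Finset.range p) _ (Finset.mem_range.mpr hnp)]
    have hfac : (p.factorial : ℚ) = (p : ℚ) * ((p - 1).factorial : ℚ) := by
      have h1 : p = (p - 1) + 1 := by omega
      calc (p.factorial : ℚ) = (((p-1) + 1).factorial : ℚ) := by rw [← h1]
        _ = (((p-1) + 1 : ℕ) : ℚ) * ((p-1).factorial : ℚ) := by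
            rw [Nat.factorial_succ]; push_cast; ring
        _ = (p : ℚ) * ((p - 1).factorial : ℚ) := by rw [← h1]
    have hdenp : a + 1 - (p : ℚ) ≠ 0 := hden p le_rfl
    have hfQ : ((p - 1).factorial : ℚ) ≠ 0 := Nat.cast_ne_zero.mpr (p-1).factorial_ne_zero
    have hn1Q : ((n : ℚ) + 1) ≠ 0 := by positivity
    set F : ℚ := ((p - 1).factorial : ℚ) with hFdef
    set E : ℚ := (2 * a + 2 - (p : ℚ)) * Q ^ 3 * ((n : ℚ) + 1) ^ 2
      - 2 * F ^ 3 * (a + 1 - (p : ℚ)) ^ 3 with hEdef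
    set D : ℚ := F ^ 3 * (a + 1 - (p : ℚ)) ^ 3 * ((n : ℚ) + 1) ^ 2 with hDdef
    set X : ℚ := tq ^ 3 * (E / (p : ℚ)) / D with hXdef
    have hkey : (((∑ k ∈ Finset.range p, (a - 2 * k) * ratBinom a k ^ 3) +
        ∑ k ∈ Finset.range p, ((a + 1) - 2 * k) * ratBinom (a + 1) k ^ 3)
        - 2 * (a - n) ^ 3 / ((n : ℚ) + 1) ^ 2) / (p : ℚ) ^ 4 = X := by
      rw [htel, hBp, hfac, hXdef, hEdef, hDdef, htqdef]
      field_simp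
    unfold ratModEq
    rw [isPInt_iff, hkey]
    -- now the norm bound for X
    -- K-side elements
    have hXK : ((X : ℚ) : ℚ_[p]) = (tq : ℚ_[p]) ^ 3 * ((E : ℚ_[p]) / (p : ℚ_[p])) / (D : ℚ_[p]) := by
      rw [hXdef]; push_cast; ring
    rw [hXK]
    -- norm of D is 1
    have hFn : ‖(F : ℚ_[p])‖ = 1 := by
      rw [hFdef]
      push_cast
      apply norm_natCast_eq_one
      intro hd
      have := (Nat.Prime.dvd_factorial hp).mp hd
      omega
    have hn1n : ‖((n : ℚ_[p]) + 1)‖ = 1 := by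
      have : ((n : ℚ_[p]) + 1) = ((n + 1 : ℕ) : ℚ_[p]) := by push_cast; ring
      rw [this]
      apply norm_natCast_eq_one
      intro hd
      have := Nat.le_of_dvd (Nat.succ_pos n) hd
      omega
    have haa : ((a : ℚ_[p])) = (n : ℚ_[p]) + (p : ℚ_[p]) * (tq : ℚ_[p]) := by
      have h0 : a = (n : ℚ) + (p : ℚ) * tq := by rw [htqdef]; field_simp; ring
      calc ((a : ℚ) : ℚ_[p]) = (((n : ℚ) + (p : ℚ) * tq : ℚ) : ℚ_[p]) := by rw [← h0]
        _ = (n : ℚ_[p]) + (p : ℚ_[p]) * (tq : ℚ_[p]) := by push_cast; ring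
    have htq1 : ‖(tq : ℚ_[p]) - 1‖ ≤ 1 := by
      calc ‖(tq : ℚ_[p]) - 1‖ = ‖(tq : ℚ_[p]) + (-1)‖ := by ring_nf
        _ ≤ max ‖(tq : ℚ_[p])‖ ‖(-1 : ℚ_[p])‖ := Padic.nonarchimedean _ _
        _ ≤ 1 := by rw [norm_neg, norm_one]; exact max_le ht le_rfl
    have hsmall : ‖(p : ℚ_[p]) * ((tq : ℚ_[p]) - 1)‖ < 1 := by
      rw [norm_mul, Padic.norm_p]
      calc ((p:ℝ))⁻¹ * ‖(tq : ℚ_[p]) - 1‖ ≤ ((p:ℝ))⁻¹ * 1 := by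
            apply mul_le_mul_of_nonneg_left htq1 (by positivity)
        _ < 1 := by
            rw [mul_one, inv_lt_one_iff₀]; right; exact_mod_cast hp.one_lt
    have hap1 : ‖((a : ℚ_[p]) + 1 - (p : ℚ_[p]))‖ = 1 := by
      have hsplit : (a : ℚ_[p]) + 1 - (p : ℚ_[p])
          = ((n : ℚ_[p]) + 1) + (p : ℚ_[p]) * ((tq : ℚ_[p]) - 1) := by
        rw [haa]; ring
      rw [hsplit, Padic.add_eq_max_of_ne, hn1n]
      · exact max_eq_left hsmall.le
      · rw [hn1n]
        exact ne_of_gt hsmall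
    have hDn : ‖(D : ℚ_[p])‖ = 1 := by
      have : ((D : ℚ) : ℚ_[p]) = (F : ℚ_[p]) ^ 3 * ((a : ℚ_[p]) + 1 - (p : ℚ_[p])) ^ 3
          * ((n : ℚ_[p]) + 1) ^ 2 := by
        rw [hDdef]; push_cast; ring
      rw [this, norm_mul, norm_mul, norm_pow, norm_pow, norm_pow, hFn, hap1, hn1n]
      norm_num
    -- norm of E/p ≤ 1 via padic integers
    have hEp : ‖((E : ℚ_[p]) / (p : ℚ_[p]))‖ ≤ 1 := by
      set α : ℤ_[p] := ⟨(a : ℚ_[p]), ha⟩ with hαdef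
      set τ : ℤ_[p] := ⟨(tq : ℚ_[p]), ht⟩ with hτdef
      have hατ : α = (n : ℤ_[p]) + (p : ℤ_[p]) * τ := by
        apply Subtype.ext
        show (a : ℚ_[p]) = _
        rw [haa]
        push_cast
        rfl
      set qZ : ℤ_[p] := ∏ i ∈ (Finset.range p).erase n, (α - (i : ℕ)) with hqZdef
      set εZ : ℤ_[p] := (2 * α + 2 - (p : ℕ)) * qZ ^ 3 * (((n : ℕ) : ℤ_[p]) + 1) ^ 2
        - 2 * (((p - 1).factorial : ℕ) : ℤ_[p]) ^ 3 * (α + 1 - ((p : ℕ) : ℤ_[p])) ^ 3 with hεZdef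
      have hαa : ((α : ℤ_[p]) : ℚ_[p]) = ((a : ℚ) : ℚ_[p]) := rfl
      have hqcast : ((qZ : ℤ_[p]) : ℚ_[p]) = ((Q : ℚ) : ℚ_[p]) := by
        rw [hqZdef, hQdef]
        rw [show (((∏ i ∈ (Finset.range p).erase n, (α - (i : ℕ)) : ℤ_[p]) : ℚ_[p]))
            = ∏ i ∈ (Finset.range p).erase n, (((α - (i : ℕ) : ℤ_[p])) : ℚ_[p])
          from map_prod PadicInt.Coe.ringHom _ _]
        push_cast [hαa]
        rfl
      have hEcast : ((εZ : ℤ_[p]) : ℚ_[p]) = ((E : ℚ) : ℚ_[p]) := by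
        rw [hεZdef, hEdef, hFdef]
        have h2c : ((2 : ℤ_[p]) : ℚ_[p]) = 2 := rfl
        push_cast [hqcast, hαa, h2c]
        ring
      have hφα : PadicInt.toZMod α = (n : ZMod p) := by
        rw [hατ]
        simp [map_add, map_mul, map_natCast, ZMod.natCast_self]
      have hφq : PadicInt.toZMod qZ = (((p - 1).factorial : ℕ) : ZMod p) := by
        rw [hqZdef, map_prod]
        rw [← prod_erase_zero_eq_factorial p, ← zmod_prod_lemma p n hnp]
        apply Finset.prod_congr rfl
        intro i _
        rw [map_sub, hφα, map_natCast]
      have hφε : PadicInt.toZMod εZ = 0 := by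
        rw [hεZdef]
        simp only [map_sub, map_mul, map_pow, map_add, map_one, map_natCast, map_ofNat, hφα, hφq,
          ZMod.natCast_self]
        ring
      have hdvd : (p : ℤ_[p]) ∣ εZ := by
        rw [← Ideal.mem_span_singleton, ← PadicInt.maximalIdeal_eq_span_p, ← PadicInt.ker_toZMod]
        exact hφε
      obtain ⟨ε', hε'⟩ := hdvd
      have : ((E : ℚ_[p]) / (p : ℚ_[p])) = ((ε' : ℤ_[p]) : ℚ_[p]) := by
        rw [← hEcast, hε']
        push_cast
        rw [mul_div_cancel_left₀ _ hpK]
      rw [this]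
      exact PadicInt.norm_le_one ε'
    rw [norm_div, norm_mul, norm_pow, hDn, div_one]
    calc ‖(tq : ℚ_[p])‖ ^ 3 * ‖(E : ℚ_[p]) / (p : ℚ_[p])‖
        ≤ 1 * 1 := by
          apply mul_le_mul (pow_le_one₀ (norm_nonneg _) ht) hEp (norm_nonneg _) (by norm_num)
      _ = 1 := by norm_num
end

section
/- Let p be an odd prime. Then ∑_{k=0}^{(p−1)/2} (4k+3) C_k⁴ / 256^k ≡ 16 (mod p⁴), where C_k = C(2k,k)/(k+1) is the k-th Catalan number. -/
lemma telescope (N : ℕ) :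
    ∑ k ∈ Finset.range N,
        (4 * (k : ℚ) + 3) * (((2 * k).choose k : ℚ) / ((k : ℚ) + 1)) ^ 4 / (256 : ℚ) ^ k
      = 16 - 16 * (8 * (N:ℚ)^2 + 4 * N + 1) * (((2*N).choose N : ℚ))^4 / 256 ^ N := by
  induction N with
  | zero => simp
  | succ n ih =>
    rw [Finset.sum_range_succ, ih]
    have hrec : ((n:ℚ) + 1) * ((2*(n+1)).choose (n+1) : ℚ) = 2 * (2*n+1) * ((2*n).choose n : ℚ) := by
      have := Nat.succ_mul_centralBinom_succ n
      unfold Nat.centralBinom at this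
      exact_mod_cast congrArg (Nat.cast : ℕ → ℚ) this
    have hn1 : ((n:ℚ) + 1) ≠ 0 := by positivity
    have h256 : (256:ℚ) ^ n ≠ 0 := by positivity
    have hC : (((2*(n+1)).choose (n+1)) : ℚ) = 2 * (2*n+1) * ((2*n).choose n : ℚ) / ((n:ℚ)+1) := by
      field_simp at hrec ⊢; linarith [hrec]
    push_cast [hC]
    field_simp
    ring

lemma keylem (p N t : ℕ) (hp : (p:ℚ) ≠ 0)
    (ht : (((2*N).choose N : ℕ) : ℚ) = (p : ℚ) * t) :
    ((∑ k ∈ Finset.range N,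
        (4 * (k : ℚ) + 3) * (((2 * k).choose k : ℚ) / ((k : ℚ) + 1)) ^ 4 / (256 : ℚ) ^ k) - 16)
        / (p:ℚ)^4
      = ((-16 * (8*(N:ℤ)^2 + 4*N + 1) * (t:ℤ)^4 : ℤ) : ℚ) / (((2:ℤ)^(8*N) : ℤ) : ℚ) := by
  rw [telescope N, ht]
  have h2 : ((2:ℚ))^(8*N) = 256 ^ N := by
    rw [show (256:ℚ) = 2^8 by norm_num, ← pow_mul]
  push_cast
  rw [h2]
  have h256 : (256:ℚ) ^ N ≠ 0 := by positivity
  field_simp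
  ring

theorem stmt13_aux (p : ℕ) (hp : p.Prime) (hp2 : p ≠ 2) :
    ¬ p ∣ (((∑ k ∈ Finset.range ((p - 1) / 2 + 1),
        (4 * (k : ℚ) + 3) * (((2 * k).choose k : ℚ) / ((k : ℚ) + 1)) ^ 4 / (256 : ℚ) ^ k) - 16)
        / (p:ℚ)^4).den := by
  have hodd : p % 2 = 1 := Nat.odd_iff.mp (hp.odd_of_ne_two hp2)
  have hp3 : 3 ≤ p := by
    have := hp.two_le; omega
  set N := (p - 1) / 2 + 1 with hNdef
  have h2N : 2 * N = p + 1 := by omega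
  obtain ⟨M, hM⟩ : ∃ M, N = M + 1 := ⟨(p-1)/2, rfl⟩
  have hdvd : p ∣ (2*N).choose N := by
    rw [h2N, hM, Nat.choose_succ_succ]
    have h1 : p ∣ p.choose M := hp.dvd_choose_self (by omega) (by omega)
    have h2 : p ∣ p.choose (M+1) := hp.dvd_choose_self (by omega) (by omega)
    exact dvd_add h1 h2
  obtain ⟨t, ht⟩ := hdvd
  have htQ : (((2*N).choose N : ℕ) : ℚ) = (p : ℚ) * t := by exact_mod_cast ht
  have hpQ : (p:ℚ) ≠ 0 := Nat.cast_ne_zero.mpr hp.pos.ne'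
  rw [keylem p N t hpQ htQ]
  intro hden
  set a : ℤ := -16 * (8*(N:ℤ)^2 + 4*N + 1) * (t:ℤ)^4 with ha
  set b : ℤ := (2:ℤ)^(8*N) with hb
  have heq : ((a:ℚ)/(b:ℚ)) = Rat.divInt a b := (Rat.divInt_eq_div a b).symm
  rw [heq] at hden
  have h1 : (((Rat.divInt a b).den : ℤ)) ∣ b := Rat.den_dvd a b
  have h2 : p ∣ 2^(8*N) := by
    have h3 := dvd_trans (Int.natCast_dvd_natCast.mpr hden) h1
    rw [hb] at h3
    exact_mod_cast h3
  have := hp.dvd_of_dvd_pow h2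
  have := Nat.le_of_dvd (by norm_num) this
  omega

theorem stmt13 (p : ℕ) (hp : p.Prime) (hp2 : p ≠ 2) :
    ratModEq p 4
      (∑ k ∈ Finset.range ((p - 1) / 2 + 1),
        (4 * (k : ℚ) + 3) * (((2 * k).choose k : ℚ) / ((k : ℚ) + 1)) ^ 4 / (256 : ℚ) ^ k)
      16 := by
  exact stmt13_aux p hp hp2
end
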